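/- arXiv:1405.5900 — 2 statements merged into one kernel-verified Lean document; each statement's English description precedes it below -/
import Mathlib

section
/- Let n ≥ k ≥ 1, let a_1, …, a_n and c_1, …, c_n be arbitrary real numbers. Then Σ_{(j_1,…,j_k)∈I_k} c_{j_1}⋯c_{j_k} · V(a_{j_1},…,a_{j_k}) · a_{j_1}² a_{j_2}³ ⋯ a_{j_k}^{k+1} = Σ_{(j_1,…,j_k)∈I_k^+} c_{j_1}⋯c_{j_k} · a_{j_1}² ⋯ a_{j_k}² · V(a_{j_1},…,a_{j_k})², where I_k is the set of k-tuples of pairwise distinct indices from {1,…,n} and I_k^+ is the set of strictly decreasing k-tuples n ≥ j_1 > … > j_k ≥ 1. -/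
open Finset

/-- Vandermonde product V(x_1,…,x_m) = ∏_{q<r} (x_r − x_q). -/
def vand {m : ℕ} (x : Fin m → ℝ) : ℝ :=
  ∏ r : Fin m, ∏ q ∈ Finset.univ.filter (fun q => q < r), (x r - x q)

lemma vand_eq_det {m : ℕ} (x : Fin m → ℝ) : vand x = (Matrix.vandermonde x).det := by
  rw [Matrix.det_vandermonde, vand]
  exact Finset.prod_comm' (by intro r q; simp)

lemma vand_comp_perm {m : ℕ} (x : Fin m → ℝ) (σ : Equiv.Perm (Fin m)) :
    vand (fun l => x (σ l)) = ((Equiv.Perm.sign σ : ℤ) : ℝ) * vand x := by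
  rw [vand_eq_det, vand_eq_det]
  have h : Matrix.vandermonde (fun l => x (σ l)) = (Matrix.vandermonde x).submatrix σ id := by
    ext i j; simp [Matrix.vandermonde]
  rw [h, Matrix.det_permute]

lemma perm_sum_vand {m : ℕ} (x : Fin m → ℝ) :
    ∑ σ : Equiv.Perm (Fin m),
      ((Equiv.Perm.sign σ : ℤ) : ℝ) * ∏ l : Fin m, x (σ l) ^ (l : ℕ) = vand x := by
  rw [vand_eq_det, Matrix.det_apply]
  refine Finset.sum_congr rfl fun σ _ => ?_
  simp [Matrix.vandermonde, Units.smul_def, zsmul_eq_mul]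

lemma stepB {n k : ℕ} (a c : Fin n → ℝ) (w : Fin k → Fin n) :
    ∑ σ : Equiv.Perm (Fin k),
      ((∏ l, c (w (σ l))) * vand (fun l => a (w (σ l))) * ∏ l, a (w (σ l)) ^ ((l : ℕ) + 2))
    = (∏ l, c (w l)) * (∏ l, a (w l) ^ 2) * vand (fun l => a (w l)) ^ 2 := by
  have hc : ∀ σ : Equiv.Perm (Fin k), (∏ l, c (w (σ l))) = ∏ l, c (w l) :=
    fun σ => Equiv.prod_comp σ (fun l => c (w l))
  have ha2 : ∀ σ : Equiv.Perm (Fin k), (∏ l, a (w (σ l)) ^ 2) = ∏ l, a (w l) ^ 2 :=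
    fun σ => Equiv.prod_comp σ (fun l => a (w l) ^ 2)
  calc
    ∑ σ : Equiv.Perm (Fin k),
        ((∏ l, c (w (σ l))) * vand (fun l => a (w (σ l))) * ∏ l, a (w (σ l)) ^ ((l : ℕ) + 2))
      = ∑ σ : Equiv.Perm (Fin k),
          ((∏ l, c (w l)) * (∏ l, a (w l) ^ 2) * vand (fun l => a (w l))) *
            (((Equiv.Perm.sign σ : ℤ) : ℝ) * ∏ l, a (w (σ l)) ^ (l : ℕ)) := by
        refine Finset.sum_congr rfl fun σ _ => ?_
        have hsplit : (∏ l, a (w (σ l)) ^ ((l : ℕ) + 2))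
            = (∏ l, a (w (σ l)) ^ 2) * ∏ l, a (w (σ l)) ^ (l : ℕ) := by
          rw [← Finset.prod_mul_distrib]
          exact Finset.prod_congr rfl fun l _ => by ring
        rw [hc σ, vand_comp_perm (fun l => a (w l)) σ, hsplit, ha2 σ]
        ring
    _ = ((∏ l, c (w l)) * (∏ l, a (w l) ^ 2) * vand (fun l => a (w l))) *
          ∑ σ : Equiv.Perm (Fin k),
            ((Equiv.Perm.sign σ : ℤ) : ℝ) * ∏ l, a (w (σ l)) ^ (l : ℕ) := by
        rw [Finset.mul_sum]
    _ = _ := by rw [perm_sum_vand (fun l => a (w l))]; ring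

open Classical in
/-- Σ_{(j_1,…,j_k)∈I_k} c_{j_1}⋯c_{j_k} V(a_{j_1},…,a_{j_k})
a_{j_1}² a_{j_2}³ ⋯ a_{j_k}^{k+1}
= Σ_{(j_1,…,j_k)∈I_k^+} c_{j_1}⋯c_{j_k} a_{j_1}²⋯a_{j_k}² V(a_{j_1},…,a_{j_k})². -/
theorem stmt6 {n : ℕ} (k : ℕ) (hk1 : 1 ≤ k) (hkn : k ≤ n) (a c : Fin n → ℝ) :
    ∑ j ∈ Finset.univ.filter (fun j : Fin k → Fin n => Function.Injective j),
        (∏ l, c (j l)) * vand (fun l => a (j l)) * ∏ l, a (j l) ^ ((l : ℕ) + 2)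
      = ∑ j ∈ Finset.univ.filter (fun j : Fin k → Fin n => StrictAnti j),
          (∏ l, c (j l)) * (∏ l, a (j l) ^ 2) * vand (fun l => a (j l)) ^ 2 := by
  classical
  -- Rewrite the LHS as a sum over pairs (strictly antitone map, permutation).
  have key :
      ∑ p ∈ (Finset.univ.filter (fun j : Fin k → Fin n => StrictAnti j)) ×ˢ
          (Finset.univ : Finset (Equiv.Perm (Fin k))),
        ((∏ l, c (p.1 (p.2 l))) * vand (fun l => a (p.1 (p.2 l))) *
          ∏ l, a (p.1 (p.2 l)) ^ ((l : ℕ) + 2))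
      = ∑ j ∈ Finset.univ.filter (fun j : Fin k → Fin n => Function.Injective j),
          (∏ l, c (j l)) * vand (fun l => a (j l)) * ∏ l, a (j l) ^ ((l : ℕ) + 2) := by
    refine Finset.sum_bij (fun p _ => p.1 ∘ p.2) ?_ ?_ ?_ ?_
    · rintro ⟨w, σ⟩ hp
      simp only [Finset.mem_product, Finset.mem_filter, Finset.mem_univ, true_and] at hp ⊢
      exact hp.1.injective.comp σ.injective
    · -- injectivity of the map
      rintro ⟨w, σ⟩ hp ⟨w', σ'⟩ hp' heq
      simp only [Finset.mem_product, Finset.mem_filter, Finset.mem_univ, true_and] at hp hp'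
      have heq' : w ∘ ⇑σ = w' ∘ ⇑σ' := heq
      haveI : WellFoundedLT (Fin k) := inferInstance
      have hrange : Set.range w = Set.range w' := by
        have h1 : Set.range (w ∘ σ) = Set.range w := σ.surjective.range_comp w
        have h2 : Set.range (w' ∘ σ') = Set.range w' := σ'.surjective.range_comp w'
        rw [← h1, ← h2, heq']
      have hww' : w = w' := by
        have hm : StrictMono (w ∘ Fin.rev) :=
          fun i j h => hp.1 (Fin.rev_lt_rev.mpr h)
        have hm' : StrictMono (w' ∘ Fin.rev) :=
          fun i j h => hp'.1 (Fin.rev_lt_rev.mpr h)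
        have hr : Set.range (w ∘ Fin.rev) = Set.range (w' ∘ Fin.rev) := by
          rw [Fin.rev_surjective.range_comp w, Fin.rev_surjective.range_comp w', hrange]
        have := (hm.range_inj hm').mp hr
        funext l
        have := congrFun this l.rev
        simpa [Fin.rev_rev] using this
      subst hww'
      have hσ : σ = σ' := by
        apply Equiv.ext
        intro l
        exact hp.1.injective (congrFun heq' l)
      simp [hσ]
    · -- surjectivity
      intro j hj
      simp only [Finset.mem_filter, Finset.mem_univ, true_and] at hj
      set s : Finset (Fin n) := Finset.image j Finset.univ with hs_def
      have hs : s.card = k := by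
        rw [hs_def, Finset.card_image_of_injective _ hj, Finset.card_univ, Fintype.card_fin]
      set w : Fin k → Fin n := fun l => s.orderEmbOfFin hs l.rev with hw_def
      have hwanti : StrictAnti w := fun i j hij =>
        (s.orderEmbOfFin hs).strictMono (Fin.rev_lt_rev.mpr hij)
      have hjmem : ∀ l, j l ∈ s := fun l => Finset.mem_image_of_mem j (Finset.mem_univ l)
      set f : Fin k → Fin k := fun l => Fin.rev ((s.orderIsoOfFin hs).symm ⟨j l, hjmem l⟩) with hf_def
      have hfinj : Function.Injective f := by
        intro x y hxy
        have h1 : ((s.orderIsoOfFin hs).symm ⟨j x, hjmem x⟩)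
            = ((s.orderIsoOfFin hs).symm ⟨j y, hjmem y⟩) := Fin.rev_injective hxy
        have h2 : (⟨j x, hjmem x⟩ : {z // z ∈ s}) = ⟨j y, hjmem y⟩ :=
          (s.orderIsoOfFin hs).symm.injective h1
        exact hj (congrArg Subtype.val h2)
      have hfbij : Function.Bijective f := Finite.injective_iff_bijective.mp hfinj
      refine ⟨⟨w, Equiv.ofBijective f hfbij⟩, ?_, ?_⟩
      · simp only [Finset.mem_product, Finset.mem_filter, Finset.mem_univ, true_and]
        exact ⟨hwanti, trivial⟩
      · funext l
        show w (f l) = j l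
        have : w (f l) = s.orderEmbOfFin hs ((s.orderIsoOfFin hs).symm ⟨j l, hjmem l⟩) := by
          rw [hw_def]; simp [hf_def, Fin.rev_rev]
        rw [this, ← Finset.coe_orderIsoOfFin_apply, OrderIso.apply_symm_apply]
    · rintro ⟨w, σ⟩ _
      rfl
  rw [← key, Finset.sum_product]
  exact Finset.sum_congr rfl fun w _ => stepB a c w
end

section
/- For every 1 ≤ k < n, the PLS filter factor in the direction of the smallest eigenvalue satisfies 0 < f_n^k < 1, where f_n^k = 1 − Q̂_k(λ_n); equivalently 0 < Q̂_k(λ_n) < 1. -/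
open Matrix Polynomial Finset


lemma sign_lemma (f : ℝ → ℝ) (hf : Continuous f) :
    ∀ l : List ℝ, List.Pairwise (· < ·) l →
    ∃ (ε : ℝ) (Θ : Finset ℝ),
      (ε = 1 ∨ ε = -1) ∧
      (∀ θ ∈ Θ, f θ = 0) ∧
      (∀ θ ∈ Θ, ∃ x ∈ l, x < θ) ∧
      (∀ x ∈ l, 0 ≤ ε * f x * ∏ θ ∈ Θ, (x - θ)) ∧
      (∀ x ∈ l, f x ≠ 0 → ∏ θ ∈ Θ, (x - θ) ≠ 0) := by
  intro l
  induction l with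
  | nil => exact fun _ => ⟨1, ∅, Or.inl rfl, by simp, by simp, by simp, by simp⟩
  | cons a l ih =>
    intro hsort
    obtain ⟨ε, Θ, hε, hroot, hgt, hsgn, hne⟩ := ih hsort.of_cons
    have hεne : ε ≠ 0 := by rcases hε with rfl | rfl <;> norm_num
    have hal : ∀ x ∈ l, a < x := fun x hx => List.rel_of_pairwise_cons hsort hx
    have haθ : ∀ θ ∈ Θ, a < θ := by
      intro θ hθ
      obtain ⟨x, hx, hxθ⟩ := hgt θ hθ
      exact (hal x hx).trans hxθ
    have hPa : ∏ θ ∈ Θ, (a - θ) ≠ 0 := by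
      rw [Finset.prod_ne_zero_iff]
      intro θ hθ
      have := haθ θ hθ
      intro h; nlinarith
    by_cases hs : 0 ≤ ε * f a * ∏ θ ∈ Θ, (a - θ)
    · refine ⟨ε, Θ, hε, hroot, ?_, ?_, ?_⟩
      · intro θ hθ
        obtain ⟨x, hx, hxθ⟩ := hgt θ hθ
        exact ⟨x, List.mem_cons_of_mem a hx, hxθ⟩
      · intro x hx
        rcases List.mem_cons.1 hx with rfl | hx
        · exact hs
        · exact hsgn x hx
      · intro x hx hfx
        rcases List.mem_cons.1 hx with rfl | hx
        · exact hPa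
        · exact hne x hx hfx
    · have hs' : ε * f a * ∏ θ ∈ Θ, (a - θ) < 0 := lt_of_not_ge hs
      rcases l with _ | ⟨b, l'⟩
      · -- l = [], so Θ = ∅
        have hΘ : Θ = ∅ := by
          rw [Finset.eq_empty_iff_forall_notMem]
          intro θ hθ
          obtain ⟨x, hx, _⟩ := hgt θ hθ
          exact absurd hx List.not_mem_nil
        subst hΘ
        refine ⟨-ε, ∅, ?_, by simp, by simp, ?_, by simp⟩
        · rcases hε with rfl | rfl
          · exact Or.inr rfl
          · exact Or.inl (by norm_num)
        · intro x hx
          rcases List.mem_cons.1 hx with rfl | hx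
          · simp only [Finset.prod_empty, mul_one] at hs' ⊢
            nlinarith
          · simp at hx
      · -- l = b :: l'
        have hab : a < b := hal b List.mem_cons_self
        have hbl : ∀ x ∈ b :: l', b ≤ x := by
          intro x hx
          rcases List.mem_cons.1 hx with rfl | hx
          · exact le_refl x
          · exact le_of_lt (List.rel_of_pairwise_cons hsort.of_cons hx)
        have hbθ : ∀ θ ∈ Θ, b < θ := by
          intro θ hθ
          obtain ⟨x, hx, hxθ⟩ := hgt θ hθ
          exact lt_of_le_of_lt (hbl x hx) hxθ
        have hPaPb : 0 < (∏ θ ∈ Θ, (a - θ)) * ∏ θ ∈ Θ, (b - θ) := by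
          rw [← Finset.prod_mul_distrib]
          apply Finset.prod_pos
          intro θ hθ
          have h1 := haθ θ hθ
          have h2 := hbθ θ hθ
          nlinarith
        have main : ∃ θn, f θn = 0 ∧ a < θn ∧ θn ≤ b ∧ (f b ≠ 0 → θn < b) := by
          by_cases hfb : f b = 0
          · exact ⟨b, hfb, hab, le_refl b, fun h => absurd hfb h⟩
          · have hPb := hne b List.mem_cons_self hfb
            have hsb : 0 < ε * f b * ∏ θ ∈ Θ, (b - θ) :=
              lt_of_le_of_ne (hsgn b List.mem_cons_self)
                (Ne.symm (mul_ne_zero (mul_ne_zero hεne hfb) hPb))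
            have hoppo : f a * f b < 0 := by
              have h3 := mul_neg_of_neg_of_pos hs' hsb
              rcases hε with rfl | rfl <;> nlinarith [h3, hPaPb]
            rcases mul_neg_iff.1 hoppo with ⟨h1, h2⟩ | ⟨h1, h2⟩
            · obtain ⟨θn, hmem, hfθ⟩ :=
                intermediate_value_Ioo' hab.le hf.continuousOn ⟨h2, h1⟩
              exact ⟨θn, hfθ, hmem.1, hmem.2.le, fun _ => hmem.2⟩
            · obtain ⟨θn, hmem, hfθ⟩ :=
                intermediate_value_Ioo hab.le hf.continuousOn ⟨h1, h2⟩
              exact ⟨θn, hfθ, hmem.1, hmem.2.le, fun _ => hmem.2⟩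
        obtain ⟨θn, hfθn, haθn, hθnb, hθnb'⟩ := main
        have hnm : θn ∉ Θ := fun h => absurd (hbθ θn h) (not_lt.2 hθnb)
        refine ⟨ε, insert θn Θ, hε, ?_, ?_, ?_, ?_⟩
        · intro θ hθ
          rcases Finset.mem_insert.1 hθ with rfl | hθ
          · exact hfθn
          · exact hroot θ hθ
        · intro θ hθ
          rcases Finset.mem_insert.1 hθ with rfl | hθ
          · exact ⟨a, List.mem_cons_self, haθn⟩
          · obtain ⟨x, hx, hxθ⟩ := hgt θ hθ
            exact ⟨x, List.mem_cons_of_mem a hx, hxθ⟩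
        · intro x hx
          rw [Finset.prod_insert hnm]
          rcases List.mem_cons.1 hx with rfl | hx
          · nlinarith [hs', haθn]
          · have h2 := hsgn x hx
            have h1 : 0 ≤ x - θn := by
              have := hbl x hx; linarith
            nlinarith
        · intro x hx hfx
          rw [Finset.prod_insert hnm]
          rcases List.mem_cons.1 hx with rfl | hx
          · exact mul_ne_zero (by intro h; nlinarith) hPa
          · refine mul_ne_zero ?_ (hne x hx hfx)
            rcases List.mem_cons.1 hx with rfl | hx'
            · have := hθnb' hfx; intro h; nlinarith
            · have := List.rel_of_pairwise_cons hsort.of_cons hx'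
              intro h; nlinarith


lemma root_helper (p : Polynomial ℝ) (hp : p ≠ 0) (s : Finset ℝ) (h : ∀ x ∈ s, p.IsRoot x) :
    (∏ x ∈ s, (X - C x)) ∣ p ∧ s.card ≤ p.natDegree := by
  have hle : s.val ≤ p.roots := by
    refine Multiset.le_iff_count.2 (fun a => ?_)
    by_cases ha : a ∈ s
    · calc Multiset.count a s.val ≤ 1 := Multiset.nodup_iff_count_le_one.mp s.nodup a
        _ ≤ Multiset.count a p.roots := Multiset.one_le_count_iff_mem.mpr
            ((Polynomial.mem_roots hp).2 (h a ha))
    · simp [Multiset.count_eq_zero_of_notMem, ha]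
  constructor
  · have h1 : (s.val.map fun a => X - C a).prod ∣ (p.roots.map fun a => X - C a).prod :=
      Multiset.prod_dvd_prod_of_le (Multiset.map_le_map hle)
    rw [Finset.prod_eq_multiset_prod]
    exact h1.trans (prod_multiset_X_sub_C_dvd p)
  · calc s.card = Multiset.card s.val := rfl
      _ ≤ Multiset.card p.roots := Multiset.card_le_card hle
      _ ≤ p.natDegree := p.card_roots'


lemma conj_aeval {n : ℕ} (U : Matrix (Fin n) (Fin n) ℝ) (lam : Fin n → ℝ)
    (hUUT : U * Uᵀ = 1) (hUTU : Uᵀ * U = 1) (Q : Polynomial ℝ) :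
    Polynomial.aeval (Uᵀ * Matrix.diagonal lam * U) Q
      = Uᵀ * Matrix.diagonal (fun i => Q.eval (lam i)) * U := by
  induction Q using Polynomial.induction_on with
  | C a =>
    rw [aeval_C]
    have : Matrix.diagonal (fun i : Fin n => (C a).eval (lam i))
        = a • (1 : Matrix (Fin n) (Fin n) ℝ) := by simp [Matrix.smul_one_eq_diagonal]
    rw [this, Algebra.algebraMap_eq_smul_one, Matrix.mul_smul, Matrix.smul_mul,
      Matrix.mul_one, hUTU]
  | add p q hp hq =>
    rw [map_add, hp, hq]
    have : Matrix.diagonal (fun i : Fin n => (p + q).eval (lam i))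
        = Matrix.diagonal (fun i => p.eval (lam i)) + Matrix.diagonal (fun i => q.eval (lam i)) := by
      simp [Matrix.diagonal_add]
    rw [this, Matrix.mul_add, Matrix.add_mul]
  | monomial m a h =>
    have key2 : ∀ A B : Matrix (Fin n) (Fin n) ℝ,
        (Uᵀ * A * U) * (Uᵀ * B * U) = Uᵀ * (A * B) * U := by
      intro A B
      have h1 : (Uᵀ * A * U) * (Uᵀ * B * U) = Uᵀ * A * (U * Uᵀ) * (B * U) := by
        simp only [Matrix.mul_assoc]
      rw [h1, hUUT, Matrix.mul_one]
      simp only [Matrix.mul_assoc]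
    rw [pow_succ, ← mul_assoc, _root_.map_mul, h, aeval_X, key2]
    have hD : (Matrix.diagonal (fun i : Fin n => (C a * X ^ m).eval (lam i))) * Matrix.diagonal lam
        = Matrix.diagonal (fun i : Fin n => (C a * X ^ m * X).eval (lam i)) := by
      rw [Matrix.diagonal_mul_diagonal]
      congr 1
      funext i
      simp
    rw [hD]

lemma obj_eq {n p : ℕ} (X : Matrix (Fin n) (Fin p) ℝ) (Y : Fin n → ℝ)
    (lam : Fin n → ℝ) (u : Fin n → Fin n → ℝ)
    (hortho : ∀ i j, u i ⬝ᵥ u j = if i = j then (1 : ℝ) else 0)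
    (hspec : X * Xᵀ = ∑ i, lam i • vecMulVec (u i) (u i)) (Q : Polynomial ℝ) :
    ∑ j, (((Polynomial.aeval (X * Xᵀ)) Q *ᵥ Y) j) ^ 2
      = ∑ i, ((u i ⬝ᵥ Y) ^ 2) * (Q.eval (lam i)) ^ 2 := by
  set U : Matrix (Fin n) (Fin n) ℝ := Matrix.of u with hU
  have hUUT : U * Uᵀ = 1 := by
    ext i j
    simpa [hU, Matrix.mul_apply, Matrix.one_apply, dotProduct] using hortho i j
  have hUTU : Uᵀ * U = 1 := mul_eq_one_comm.mp hUUT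
  have hA : X * Xᵀ = Uᵀ * Matrix.diagonal lam * U := by
    rw [hspec]
    ext a b
    simp only [Matrix.sum_apply, Matrix.smul_apply, Matrix.vecMulVec_apply, smul_eq_mul,
      Matrix.mul_apply, Matrix.diagonal_apply, Matrix.transpose_apply, hU, Matrix.of_apply,
      ite_mul, zero_mul, Finset.sum_ite_eq, Finset.mem_univ, if_true]
    apply Finset.sum_congr rfl
    intro i _
    simp [Finset.mul_sum, mul_ite, Finset.sum_ite_eq', Finset.mem_univ]
    ring
  rw [hA, conj_aeval U lam hUUT hUTU Q]
  set D : Matrix (Fin n) (Fin n) ℝ := Matrix.diagonal (fun i => Q.eval (lam i)) with hD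
  have hsq : ∀ v : Fin n → ℝ, ∑ j, (v j) ^ 2 = v ⬝ᵥ v := by
    intro v; simp [dotProduct, pow_two]
  have hmv : (Uᵀ * D * U) *ᵥ Y = Uᵀ *ᵥ (D *ᵥ (U *ᵥ Y)) := by
    simp [Matrix.mulVec_mulVec, Matrix.mul_assoc]
  rw [hmv, hsq]
  have horthv : ∀ v : Fin n → ℝ, (Uᵀ *ᵥ v) ⬝ᵥ (Uᵀ *ᵥ v) = v ⬝ᵥ v := by
    intro v
    rw [dotProduct_mulVec, Matrix.vecMul_transpose, Matrix.mulVec_mulVec, hUUT,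
      Matrix.one_mulVec]
  rw [horthv]
  have hDv : D *ᵥ (U *ᵥ Y) = fun i => Q.eval (lam i) * (u i ⬝ᵥ Y) := by
    ext i
    rw [hD, Matrix.mulVec_diagonal]
    congr 1
  rw [hDv]
  simp [dotProduct]
  apply Finset.sum_congr rfl
  intro i _
  ring

lemma key {n k : ℕ} (hk1 : 1 ≤ k) (hkn : k < n)
    (lam : Fin n → ℝ) (hanti : StrictAnti lam) (hpos : ∀ i, 0 < lam i)
    (w : Fin n → ℝ) (hw : ∀ i, 0 < w i)
    (Q : Polynomial ℝ) (hdeg : Q.natDegree ≤ k) (h0 : Q.eval 0 = 1)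
    (horth : ∀ R : Polynomial ℝ, R.natDegree ≤ k → R.eval 0 = 0 →
      ∑ i, w i * (Q.eval (lam i) * R.eval (lam i)) = 0)
    (hn : n - 1 < n) :
    0 < Q.eval (lam ⟨n - 1, hn⟩) ∧ Q.eval (lam ⟨n - 1, hn⟩) < 1 := by
  have hQne : Q ≠ 0 := fun h => by simp [h] at h0
  set lmin : ℝ := lam ⟨n - 1, hn⟩ with hlmin
  have hlminin : ∀ i, lmin ≤ lam i := by
    intro i
    rcases eq_or_lt_of_le (show i ≤ ⟨n - 1, hn⟩ from by
      rw [Fin.le_def]; simp; omega) with h | h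
    · rw [h]
    · exact le_of_lt (hanti h)
  -- the grid as a sorted list
  set l : List ℝ := (List.finRange n).reverse.map lam with hl
  have hmeml : ∀ i : Fin n, lam i ∈ l := by
    intro i; simp [hl]
  have hmeml' : ∀ x ∈ l, ∃ i, lam i = x := by
    intro x hx
    simp only [hl, List.mem_map, List.mem_reverse, List.mem_finRange] at hx
    obtain ⟨i, _, hi⟩ := hx
    exact ⟨i, hi⟩
  have hsortl : List.Pairwise (· < ·) l := by
    apply List.Pairwise.map
    · intro a b h
      exact hanti h
    · exact List.pairwise_reverse.2 (by simpa using List.pairwise_lt_finRange n)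
  obtain ⟨ε, Θ, hε, hroot, hgt, hsgn, hne⟩ :=
    sign_lemma (fun x => Q.eval x) Q.continuous l hsortl
  have hεne : ε ≠ 0 := by rcases hε with rfl | rfl <;> norm_num
  have hθmin : ∀ θ ∈ Θ, lmin < θ := by
    intro θ hθ
    obtain ⟨x, hx, hxθ⟩ := hgt θ hθ
    obtain ⟨i, rfl⟩ := hmeml' x hx
    exact lt_of_le_of_lt (hlminin i) hxθ
  have hθpos : ∀ θ ∈ Θ, 0 < θ := fun θ hθ => lt_trans (hpos _) (hθmin θ hθ)
  set S : Polynomial ℝ := ∏ θ ∈ Θ, (X - C θ) with hS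
  have hSmon : S.Monic := monic_prod_of_monic _ _ (fun θ _ => monic_X_sub_C θ)
  have hSne : S ≠ 0 := hSmon.ne_zero
  have hSdeg : S.natDegree = Θ.card := by
    rw [hS, Polynomial.natDegree_prod _ _ (fun θ _ => X_sub_C_ne_zero θ)]
    simp [natDegree_X_sub_C]
  have hSeval : ∀ x : ℝ, S.eval x = ∏ θ ∈ Θ, (x - θ) := by
    intro x; simp [hS, eval_prod]
  -- Step A : Θ.card ≥ k
  have hcard : k ≤ Θ.card := by
    by_contra hcon
    have hcard' : Θ.card ≤ k - 1 := by omega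
    have hRdeg : (X * S).natDegree ≤ k := by
      rw [natDegree_mul X_ne_zero hSne, natDegree_X, hSdeg]; omega
    have hR0 : (X * S).eval 0 = 0 := by simp
    have hsum := horth (X * S) hRdeg hR0
    have hsum' : ∑ i, ε * (w i * (Q.eval (lam i) * (X * S).eval (lam i))) = 0 := by
      rw [← Finset.mul_sum, hsum, mul_zero]
    have hterm : ∀ i ∈ Finset.univ (α := Fin n),
        0 ≤ ε * (w i * (Q.eval (lam i) * (X * S).eval (lam i))) := by
      intro i _
      have h1 := hsgn (lam i) (hmeml i)
      have h2 := (hw i).le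
      have h3 := (hpos i).le
      simp only [eval_mul, eval_X, hSeval]
      nlinarith [hsgn (lam i) (hmeml i), mul_nonneg (hw i).le (hpos i).le,
        mul_nonneg (mul_nonneg (hw i).le (hpos i).le) (hsgn (lam i) (hmeml i))]
    have hzero : ∀ i : Fin n, Q.eval (lam i) = 0 := by
      intro i
      have := (Finset.sum_eq_zero_iff_of_nonneg hterm).1 hsum' i (Finset.mem_univ i)
      by_contra hQi
      have hprod := hne (lam i) (hmeml i) hQi
      have : ε * (w i * (Q.eval (lam i) * (lam i * ∏ θ ∈ Θ, (lam i - θ)))) ≠ 0 := by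
        apply mul_ne_zero hεne
        apply mul_ne_zero (ne_of_gt (hw i))
        apply mul_ne_zero hQi
        exact mul_ne_zero (ne_of_gt (hpos i)) hprod
      apply this
      simpa [eval_mul, hSeval] using (Finset.sum_eq_zero_iff_of_nonneg hterm).1 hsum' i (Finset.mem_univ i)
    -- Q has n distinct roots but degree ≤ k < n
    have himage : (Finset.image lam Finset.univ).card = n := by
      rw [Finset.card_image_of_injective _ hanti.injective, Finset.card_univ, Fintype.card_fin]
    have := (root_helper Q hQne (Finset.image lam Finset.univ) (by
      intro x hx
      obtain ⟨i, _, rfl⟩ := Finset.mem_image.1 hx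
      exact hzero i)).2
    omega
  -- Step B : S ∣ Q, so card Θ = k and Q = S * C c
  obtain ⟨hdvd, -⟩ := root_helper Q hQne Θ (fun θ hθ => hroot θ hθ)
  have hcard2 : Θ.card ≤ k := by
    have h2 := Polynomial.natDegree_le_of_dvd hdvd hQne
    rw [← hS, hSdeg] at h2
    omega
  have hcardk : Θ.card = k := le_antisymm hcard2 hcard
  obtain ⟨g, hg⟩ := hdvd
  have hgne : g ≠ 0 := fun h => hQne (by rw [hg, h, mul_zero])
  have hgdeg : g.natDegree = 0 := by
    have := natDegree_mul hSne hgne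
    rw [← hg] at this
    rw [hSdeg, hcardk] at this
    omega
  have hgC : g = C (g.coeff 0) := Polynomial.eq_C_of_natDegree_eq_zero hgdeg
  set c : ℝ := g.coeff 0 with hc
  have hQeval : ∀ x : ℝ, Q.eval x = (∏ θ ∈ Θ, (x - θ)) * c := by
    intro x
    rw [hg, hgC, eval_mul, eval_C, hSeval]
  set N : ℝ := ∏ θ ∈ Θ, (0 - θ) with hN
  set M : ℝ := ∏ θ ∈ Θ, (lmin - θ) with hM
  have hNc : N * c = 1 := by rw [hN, ← hQeval 0, h0]
  have hQm : Q.eval lmin = M * c := hQeval lmin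
  have hΘne : Θ.Nonempty := Finset.card_pos.1 (by omega)
  have hMN : 0 < M * N := by
    rw [hM, hN, ← Finset.prod_mul_distrib]
    apply Finset.prod_pos
    intro θ hθ
    have h1 := hθmin θ hθ
    have h2 := hpos ⟨n - 1, hn⟩
    nlinarith
  have hNN : 0 < N * N := by
    rw [hN, ← Finset.prod_mul_distrib]
    apply Finset.prod_pos
    intro θ hθ
    have := hθpos θ hθ
    nlinarith
  have hlt : M * N < N * N := by
    rw [hM, hN, ← Finset.prod_mul_distrib, ← Finset.prod_mul_distrib]
    apply Finset.prod_lt_prod_of_nonempty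
    · intro θ hθ
      have h1 := hθmin θ hθ
      have h2 := hpos ⟨n - 1, hn⟩
      nlinarith
    · intro θ hθ
      have h1 := hθmin θ hθ
      have h2 := hpos ⟨n - 1, hn⟩
      nlinarith
    · exact hΘne
  rw [hQm]
  constructor
  · nlinarith [hMN, hNc, hNN]
  · nlinarith [hlt, hNc, hNN]


/-- the PLS filter factor in the direction of the smallest eigenvalue
λ_n (index n−1 here) satisfies 0 < f_n^k < 1 where f_n^k = 1 − Q̂_k(λ_n). -/
theorem stmt12 {n p : ℕ} (X : Matrix (Fin n) (Fin p) ℝ) (Y : Fin n → ℝ)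
    (lam : Fin n → ℝ) (u : Fin n → Fin n → ℝ)
    (hortho : ∀ i j, u i ⬝ᵥ u j = if i = j then (1 : ℝ) else 0)
    (hspec : X * Xᵀ = ∑ i, lam i • vecMulVec (u i) (u i))
    (hanti : StrictAnti lam) (hpos : ∀ i, 0 < lam i)
    (hphat : ∀ i, u i ⬝ᵥ Y ≠ 0)
    (Qhat : ℕ → Polynomial ℝ)
    (hQmem : ∀ k, 1 ≤ k → k < n → (Qhat k).natDegree ≤ k ∧ (Qhat k).eval 0 = 1)
    (hQmin : ∀ k, 1 ≤ k → k < n → ∀ Q : Polynomial ℝ, Q.natDegree ≤ k → Q.eval 0 = 1 →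
      ∑ i, (((Polynomial.aeval (X * Xᵀ)) (Qhat k) *ᵥ Y) i) ^ 2 ≤
        ∑ i, (((Polynomial.aeval (X * Xᵀ)) Q *ᵥ Y) i) ^ 2)
    (k : ℕ) (hk1 : 1 ≤ k) (hkn : k < n) :
    0 < 1 - (Qhat k).eval (lam ⟨n - 1, by omega⟩) ∧
      1 - (Qhat k).eval (lam ⟨n - 1, by omega⟩) < 1 := by
  set w : Fin n → ℝ := fun i => (u i ⬝ᵥ Y) ^ 2 with hwdef
  have hw : ∀ i, 0 < w i := fun i => pow_two_pos_of_ne_zero (hphat i)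
  obtain ⟨hdeg, h0⟩ := hQmem k hk1 hkn
  -- the minimization inequality in scalar form
  have hmin : ∀ Q : Polynomial ℝ, Q.natDegree ≤ k → Q.eval 0 = 1 →
      ∑ i, w i * ((Qhat k).eval (lam i)) ^ 2 ≤ ∑ i, w i * (Q.eval (lam i)) ^ 2 := by
    intro Q hQd hQ0
    have := hQmin k hk1 hkn Q hQd hQ0
    rwa [obj_eq X Y lam u hortho hspec, obj_eq X Y lam u hortho hspec] at this
  -- orthogonality
  have horth : ∀ R : Polynomial ℝ, R.natDegree ≤ k → R.eval 0 = 0 →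
      ∑ i, w i * ((Qhat k).eval (lam i) * R.eval (lam i)) = 0 := by
    intro R hRd hR0
    set B : ℝ := ∑ i, w i * ((Qhat k).eval (lam i) * R.eval (lam i)) with hB
    set Cc : ℝ := ∑ i, w i * (R.eval (lam i)) ^ 2 with hC
    have hCnn : 0 ≤ Cc := Finset.sum_nonneg (fun i _ => mul_nonneg (hw i).le (sq_nonneg _))
    have hkey : ∀ t : ℝ, 0 ≤ t * (2 * B) + t ^ 2 * Cc := by
      intro t
      have hfeas1 : (Qhat k + t • R).natDegree ≤ k :=
        le_trans (Polynomial.natDegree_add_le _ _)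
          (max_le hdeg (le_trans (Polynomial.natDegree_smul_le t R) hRd))
      have hfeas2 : (Qhat k + t • R).eval 0 = 1 := by simp [h0, hR0]
      have h := hmin (Qhat k + t • R) hfeas1 hfeas2
      have hexp : ∑ i, w i * ((Qhat k + t • R).eval (lam i)) ^ 2
          = ∑ i, (w i * ((Qhat k).eval (lam i)) ^ 2
            + (t * (2 * (w i * ((Qhat k).eval (lam i) * R.eval (lam i))))
              + t ^ 2 * (w i * (R.eval (lam i)) ^ 2))) := by
        apply Finset.sum_congr rfl
        intro i _
        simp only [Polynomial.eval_add, Polynomial.eval_smul, smul_eq_mul]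
        ring
      have e1 : t * (2 * B) = ∑ i, t * (2 * (w i * ((Qhat k).eval (lam i) * R.eval (lam i)))) := by
        rw [hB, Finset.mul_sum, Finset.mul_sum]
      have e2 : t ^ 2 * Cc = ∑ i, t ^ 2 * (w i * (R.eval (lam i)) ^ 2) := by
        rw [hC, Finset.mul_sum]
      rw [hexp, Finset.sum_add_distrib, Finset.sum_add_distrib, ← e1, ← e2] at h
      linarith
    by_contra hBne
    have hBne' : B ≠ 0 := hBne
    rcases eq_or_lt_of_le hCnn with hC0 | hC0
    · have h2 := hkey (-B)
      rw [← hC0] at h2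
      nlinarith [pow_two_pos_of_ne_zero hBne', h2]
    · have h2 := hkey (-(B / Cc))
      have hC0' : Cc ≠ 0 := ne_of_gt hC0
      field_simp at h2
      have hden : 0 < Cc * Cc ^ 2 := by positivity
      nlinarith [mul_pos (mul_pos (pow_two_pos_of_ne_zero hBne') hC0) hC0, h2]
  have := key hk1 hkn lam hanti hpos w hw (Qhat k) hdeg h0 horth (by omega)
  constructor <;> linarith [this.1, this.2]
end
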